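/- Let n ≥ 2, a ∈ ℝⁿ, D = ℝⁿ∖{a}, x ∈ D, and t > 0. Then B_k(x, r) ⊂ B_c(x, t), where r = log(1 + t|x−a|). -/

import Mathlib

open Metric Set
open intervalIntegral RealInnerProductSpace

/-- Euclidean `n`-space. -/
abbrev E (n : ℕ) := EuclideanSpace ℝ (Fin n)

-- existence of a nonzero orthogonal vector in dimension ≥ 2
lemma exists_orth {n : ℕ} (hn : 2 ≤ n) (w : E n) :
    ∃ v : E n, v ≠ 0 ∧ inner ℝ w v = 0 := by
  have hrank : Module.finrank ℝ (E n) = n := finrank_euclideanSpace_fin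
  have h1 : Module.finrank ℝ (ℝ ∙ w) ≤ 1 := by
    rcases eq_or_ne w 0 with h | h
    · rw [h, Submodule.span_zero_singleton]
      simp
    · exact le_of_eq (finrank_span_singleton h)
  have h2 := Submodule.finrank_add_finrank_orthogonal (K := (ℝ ∙ w))
  have hpos : 0 < Module.finrank ℝ (ℝ ∙ w)ᗮ := by omega
  have hbot : (ℝ ∙ w)ᗮ ≠ ⊥ := by
    intro h
    rw [h] at hpos
    simp at hpos
  obtain ⟨v, hv, hv0⟩ := Submodule.exists_mem_ne_zero_of_ne_bot hbot
  exact ⟨v, hv0, (Submodule.mem_orthogonal _ v).mp hv w (Submodule.mem_span_singleton_self w)⟩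

-- existence of a smooth curve in the punctured space
lemma exists_curve {n : ℕ} (hn : 2 ≤ n) (a x y : E n) (hx : x ≠ a) (hy : y ≠ a) :
    ∃ γ : ℝ → E n, ContDiff ℝ 1 γ ∧ γ 0 = x ∧ γ 1 = y ∧
      ∀ s ∈ Icc (0:ℝ) 1, γ s ≠ a := by
  by_cases h : ∃ c : ℝ, a - x = c • (y - x)
  · obtain ⟨c, hc⟩ := h
    have hxy : y - x ≠ 0 := by
      intro h0
      rw [h0, smul_zero, sub_eq_zero] at hc
      exact hx hc.symm
    obtain ⟨v, hv0, hvw⟩ := exists_orth hn (y - x)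
    refine ⟨fun s => x + s • (y - x) + (s * (1 - s)) • v, ?_, by simp, by simp, ?_⟩
    · apply ContDiff.add
      · exact contDiff_const.add (contDiff_id.smul contDiff_const)
      · exact (ContDiff.mul contDiff_id (contDiff_const.sub contDiff_id)).smul contDiff_const
    · rintro s ⟨hs0, hs1⟩ heq
      have heq' : s • (y - x) + (s * (1 - s)) • v = c • (y - x) := by
        rw [← hc]
        have : x + s • (y - x) + (s * (1 - s)) • v = a := heq
        rw [← this]; abel
      have hsc : s = c := by
        have := congrArg (fun z => inner ℝ (y - x) z) heq'
        simp only [inner_add_right, inner_smul_right, hvw, mul_zero, add_zero] at this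
        have hnz : inner ℝ (y - x) (y - x) ≠ 0 := inner_self_ne_zero.mpr hxy
        exact mul_right_cancel₀ hnz this
      subst hsc
      have hz : (s * (1 - s)) • v = 0 := by
        linear_combination (norm := module) heq'
      rcases smul_eq_zero.mp hz with h0 | h0
      · rcases mul_eq_zero.mp h0 with h1 | h1
        · subst h1
          simp at heq
          exact hx heq
        · have hs : s = 1 := by linarith
          subst hs
          simp at heq
          exact hy heq
      · exact hv0 h0
  · refine ⟨fun s => x + s • (y - x), ?_, by simp, by simp, ?_⟩
    · exact contDiff_const.add (contDiff_id.smul contDiff_const)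
    · rintro s - heq
      simp only at heq
      refine h ⟨s, ?_⟩
      rw [← heq]
      abel

-- lower bound for the quasihyperbolic length of a curve
lemma curve_lower_bound {n : ℕ} (a : E n) (γ : ℝ → E n) (hγ : ContDiff ℝ 1 γ)
    (hmem : ∀ s ∈ Icc (0:ℝ) 1, γ s ≠ a) :
    Real.log (1 + dist (γ 0) (γ 1) / dist (γ 1) a)
      ≤ ∫ s in (0:ℝ)..1, ‖deriv γ s‖ / dist (γ s) a := by
  set g : ℝ → ℝ := fun s => ‖deriv γ s‖ with hgdef
  have hg : Continuous g := (hγ.continuous_deriv le_rfl).norm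
  set f : ℝ → ℝ := fun s => ∫ u in (0:ℝ)..s, g u with hfdef
  have hf : ∀ s, HasDerivAt f (g s) s := fun s =>
    intervalIntegral.integral_hasDerivAt_right (hg.intervalIntegrable 0 s)
      (hg.stronglyMeasurableAtFilter _ _) hg.continuousAt
  have hfc : Continuous f := by
    rw [continuous_iff_continuousAt]; exact fun s => (hf s).continuousAt
  have hkey : ∀ s u : ℝ, s ≤ u → dist (γ s) (γ u) ≤ f u - f s := by
    intro s u hsu
    have hseg : (∫ τ in s..u, deriv γ τ) = γ u - γ s :=
      intervalIntegral.integral_deriv_eq_sub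
        (fun τ _ => (hγ.differentiable one_ne_zero).differentiableAt)
        ((hγ.continuous_deriv le_rfl).intervalIntegrable s u)
    have hfs : f u - f s = ∫ τ in s..u, g τ :=
      intervalIntegral.integral_interval_sub_left (hg.intervalIntegrable 0 u)
        (hg.intervalIntegrable 0 s)
    rw [dist_eq_norm, norm_sub_rev, ← hseg, hfs]
    exact intervalIntegral.norm_integral_le_integral_norm hsu
  set d : ℝ := dist (γ 1) a with hddef
  have hd : 0 < d := dist_pos.2 (hmem 1 ⟨zero_le_one, le_rfl⟩)
  have hfmono : ∀ s ∈ Icc (0:ℝ) 1, f s ≤ f 1 := by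
    intro s hs
    have h0 : (0:ℝ) ≤ ∫ τ in s..1, g τ :=
      intervalIntegral.integral_nonneg hs.2 (fun τ _ => norm_nonneg _)
    have hfs : f 1 - f s = ∫ τ in s..1, g τ :=
      intervalIntegral.integral_interval_sub_left (hg.intervalIntegrable 0 1)
        (hg.intervalIntegrable 0 s)
    linarith
  have hdpos : ∀ s ∈ Icc (0:ℝ) 1, 0 < d + f 1 - f s := by
    intro s hs; have := hfmono s hs; linarith
  have hdb : ∀ s ∈ Icc (0:ℝ) 1, dist (γ s) a ≤ d + f 1 - f s := by
    intro s hs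
    have h1 := dist_triangle (γ s) (γ 1) a
    have h2 := hkey s 1 hs.2
    linarith
  have hG : ∀ s ∈ uIcc (0:ℝ) 1,
      HasDerivAt (fun u => -Real.log (d + f 1 - f u)) (g s / (d + f 1 - f s)) s := by
    intro s hs
    rw [uIcc_of_le zero_le_one] at hs
    have h1 : HasDerivAt (fun u => d + f 1 - f u) (-(g s)) s := (hf s).const_sub (d + f 1)
    have h2 := (h1.log (ne_of_gt (hdpos s hs))).neg
    rw [neg_div, neg_neg] at h2
    exact h2
  have hcontden : ContinuousOn (fun s => g s / (d + f 1 - f s)) (uIcc (0:ℝ) 1) := by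
    apply ContinuousOn.div hg.continuousOn
      ((continuous_const.sub hfc).continuousOn)
    intro s hs
    rw [uIcc_of_le zero_le_one] at hs
    exact ne_of_gt (hdpos s hs)
  have hint1 : IntervalIntegrable (fun s => g s / (d + f 1 - f s)) MeasureTheory.volume 0 1 :=
    hcontden.intervalIntegrable
  have hint2 : IntervalIntegrable (fun s => g s / dist (γ s) a) MeasureTheory.volume 0 1 := by
    apply ContinuousOn.intervalIntegrable
    refine ContinuousOn.div hg.continuousOn
      ((hγ.continuous.dist continuous_const).continuousOn) ?_
    intro s hs
    rw [uIcc_of_le zero_le_one] at hs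
    exact ne_of_gt (dist_pos.2 (hmem s hs))
  have heq : (∫ s in (0:ℝ)..1, g s / (d + f 1 - f s))
      = Real.log (d + f 1) - Real.log d := by
    rw [intervalIntegral.integral_eq_sub_of_hasDerivAt hG hint1]
    have hf0 : f 0 = 0 := intervalIntegral.integral_same
    simp [hf0]
    ring
  have hmono : (∫ s in (0:ℝ)..1, g s / (d + f 1 - f s))
      ≤ ∫ s in (0:ℝ)..1, g s / dist (γ s) a := by
    apply intervalIntegral.integral_mono_on zero_le_one hint1 hint2
    intro s hs
    exact div_le_div_of_nonneg_left (norm_nonneg _) (dist_pos.2 (hmem s hs)) (hdb s hs)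
  have hlog : Real.log (1 + dist (γ 0) (γ 1) / d) ≤ Real.log (d + f 1) - Real.log d := by
    have hf1 : dist (γ 0) (γ 1) ≤ f 1 := by
      have := hkey 0 1 zero_le_one
      have hf0 : f 0 = 0 := intervalIntegral.integral_same
      linarith
    have hf1nn : (0:ℝ) ≤ f 1 := intervalIntegral.integral_nonneg zero_le_one (fun τ _ => norm_nonneg _)
    rw [← Real.log_div (by linarith) (ne_of_gt hd)]
    have hdn : 0 ≤ dist (γ 0) (γ 1) / d := div_nonneg dist_nonneg hd.le
    apply Real.log_le_log (by linarith)
    rw [le_div_iff₀ hd]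
    have h0 : 0 ≤ dist (γ 0) (γ 1) := dist_nonneg
    field_simp
    linarith
  calc Real.log (1 + dist (γ 0) (γ 1) / d) ≤ Real.log (d + f 1) - Real.log d := hlog
    _ = ∫ s in (0:ℝ)..1, g s / (d + f 1 - f s) := heq.symm
    _ ≤ _ := hmono

/-- The quasihyperbolic metric of a domain `D`:
`k_D(x,y) = inf_γ ∫_γ |dz| / δ_D(z)`, the infimum of the quasihyperbolic lengths of
curves in `D` joining `x` and `y`, where `δ_D(z) = dist(z, ∂D)`. -/
noncomputable def quasiHyperDist {n : ℕ} (D : Set (E n)) (x y : E n) : ℝ :=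
  sInf {L : ℝ | ∃ γ : ℝ → E n, ContDiff ℝ 1 γ ∧ γ 0 = x ∧ γ 1 = y ∧
    (∀ s ∈ Icc (0 : ℝ) 1, γ s ∈ D) ∧
    L = ∫ s in (0 : ℝ)..1, ‖deriv γ s‖ / infDist (γ s) (frontier D)}

/-- **Quasihyperbolic balls inside Cassinian balls in punctured space.**
Let `D = ℝⁿ∖{a}`, `x ∈ D` and `t > 0`.  Then `B_k(x,r) ⊆ B_c(x,t)` with
`r = log(1 + t|x-a|)`; here `c_D(x,y) = |x-y|/(|x-a||y-a|)`. -/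
theorem quasihyperbolicBall_subset_cassinianBall_punctured (n : ℕ) (hn : 2 ≤ n)
    (a x : E n) (hx : x ≠ a) (t : ℝ) (ht : 0 < t) :
    {y : E n | y ≠ a ∧ quasiHyperDist {a}ᶜ x y < Real.log (1 + t * dist x a)}
      ⊆ {y : E n | y ≠ a ∧ dist x y / (dist x a * dist y a) < t} := by
  intro y hy
  obtain ⟨hya, hk⟩ := hy
  refine ⟨hya, ?_⟩
  have hdx : 0 < dist x a := dist_pos.2 hx
  have hdy : 0 < dist y a := dist_pos.2 hya
  -- the frontier of the punctured space is {a}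
  haveI : Nontrivial (E n) := by
    refine ⟨EuclideanSpace.single ⟨0, by omega⟩ 1, 0, ?_⟩
    intro h
    have := congrArg (fun v : E n => v ⟨0, by omega⟩) h
    simp [EuclideanSpace.single] at this
  haveI : Filter.NeBot (nhdsWithin a {a}ᶜ) := Module.punctured_nhds_neBot ℝ (E n) a
  have hfr : frontier ({a}ᶜ : Set (E n)) = {a} := by
    rw [frontier_compl, frontier_eq_closure_inter_closure]
    rw [closure_singleton]
    have : closure ({a}ᶜ : Set (E n)) = univ := by
      rw [dense_iff_closure_eq.mp (dense_compl_singleton a)]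
    rw [this]
    simp
  set S : Set ℝ := {L : ℝ | ∃ γ : ℝ → E n, ContDiff ℝ 1 γ ∧ γ 0 = x ∧ γ 1 = y ∧
    (∀ s ∈ Icc (0 : ℝ) 1, γ s ∈ ({a}ᶜ : Set (E n))) ∧
    L = ∫ s in (0 : ℝ)..1, ‖deriv γ s‖ / infDist (γ s) (frontier ({a}ᶜ : Set (E n)))} with hS
  have hkS : sInf S < Real.log (1 + t * dist x a) := hk
  have hSne : S.Nonempty := by
    obtain ⟨γ, h1, h2, h3, h4⟩ := exists_curve hn a x y hx hya
    exact ⟨_, γ, h1, h2, h3, fun s hs => h4 s hs, rfl⟩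
  have hlb : ∀ L ∈ S, Real.log (1 + dist x y / dist y a) ≤ L := by
    rintro L ⟨γ, hγ, h0, h1, hmem, rfl⟩
    have : (∫ s in (0:ℝ)..1, ‖deriv γ s‖ / infDist (γ s) (frontier ({a}ᶜ : Set (E n))))
        = ∫ s in (0:ℝ)..1, ‖deriv γ s‖ / dist (γ s) a := by
      congr 1
      ext s
      rw [hfr, infDist_singleton]
    rw [this]
    have := curve_lower_bound a γ hγ (fun s hs => hmem s hs)
    rwa [h0, h1] at this
  have hle : Real.log (1 + dist x y / dist y a) ≤ sInf S := le_csInf hSne hlb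
  have hlt : Real.log (1 + dist x y / dist y a) < Real.log (1 + t * dist x a) :=
    lt_of_le_of_lt hle hkS
  have hpos : (0:ℝ) < 1 + dist x y / dist y a := by
    have : 0 ≤ dist x y / dist y a := div_nonneg dist_nonneg hdy.le
    linarith
  have h2 : 1 + dist x y / dist y a < 1 + t * dist x a :=
    (Real.log_lt_log_iff hpos (by nlinarith)).mp hlt
  have h3 : dist x y / dist y a < t * dist x a := by linarith
  have h4 : dist x y < t * dist x a * dist y a := by
    rw [div_lt_iff₀ hdy] at h3
    linarith
  rw [div_lt_iff₀ (mul_pos hdx hdy)]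
  nlinarith
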